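/- Let $p \geq 2$, $s \in (0,1]$, and suppose $\int_{-2}^2 (1 + a s x)^p \frac{\sqrt{4-x^2}}{2\pi}\,dx \leq (1+a^2)^{p/2}$ for all sufficiently small $a > 0$. Then $p(p-1)s^2 \leq p$, i.e. $s \leq (p-1)^{-1/2}$. -/

import Mathlib

lemma sqrt_four : Real.sqrt 4 = 2 := by
  rw [show (4:ℝ) = 2^2 by norm_num, Real.sqrt_sq (by norm_num)]

lemma sc0 : ∫ x in (-2:ℝ)..2, Real.sqrt (4 - x^2) = 2 * Real.pi := by
  have key : ∫ x in (-2:ℝ)..2, Real.sqrt (4 - x^2)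
      = (fun y : ℝ => y/2 * Real.sqrt (4 - y^2) + 2 * Real.arcsin (y/2)) 2
        - (fun y : ℝ => y/2 * Real.sqrt (4 - y^2) + 2 * Real.arcsin (y/2)) (-2) := by
    refine intervalIntegral.integral_eq_sub_of_hasDeriv_right_of_le
      (f := fun y : ℝ => y/2 * Real.sqrt (4 - y^2) + 2 * Real.arcsin (y/2))
      (f' := fun x : ℝ => Real.sqrt (4 - x^2)) (by norm_num) ?_ ?_ ?_
    · apply Continuous.continuousOn
      have : Continuous Real.arcsin := Real.continuous_arcsin
      fun_prop
    · intro x hx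
      have hx1 := hx.1
      have hx2 := hx.2
      have hpos : 0 < 4 - x^2 := by nlinarith
      have hS0 : Real.sqrt (4 - x^2) ≠ 0 := ne_of_gt (Real.sqrt_pos.mpr hpos)
      have hS2 : Real.sqrt (4 - x^2) ^ 2 = 4 - x^2 := Real.sq_sqrt hpos.le
      have hsq : HasDerivAt (fun y : ℝ => 4 - y^2) (-(2*x)) x := by
        simpa using ((hasDerivAt_pow 2 x).const_sub 4)
      have h1 : HasDerivAt (fun y : ℝ => Real.sqrt (4 - y^2))
          (-(2*x) / (2 * Real.sqrt (4 - x^2))) x := hsq.sqrt (ne_of_gt hpos)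
      have h3 := ((hasDerivAt_id x).div_const 2).mul h1
      have h4 : HasDerivAt (fun y : ℝ => Real.arcsin (y/2))
          (1 / Real.sqrt (1 - (x/2)^2) * (1/2)) x :=
        (Real.hasDerivAt_arcsin (by intro hc; rw [div_eq_iff (by norm_num : (2:ℝ) ≠ 0)] at hc; linarith)
          (by intro hc; rw [div_eq_iff (by norm_num : (2:ℝ) ≠ 0)] at hc; linarith)).comp x
          ((hasDerivAt_id x).div_const 2)
      have h5 := h3.add (h4.const_mul 2)
      have hhalf : Real.sqrt (1 - (x/2)^2) = Real.sqrt (4 - x^2) / 2 := by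
        rw [show (1 - (x/2)^2) = (4 - x^2)/4 by ring, Real.sqrt_div hpos.le, sqrt_four]
      refine (HasDerivAt.hasDerivWithinAt ?_)
      convert h5 using 1
      · rfl
      rw [hhalf]
      simp only [id, Pi.neg_apply, Pi.pow_apply]
      field_simp
      nlinarith [hS2, Real.sqrt_nonneg (4 - x^2)]
    · exact (Continuous.continuousOn (by fun_prop)).intervalIntegrable
  rw [key]
  norm_num [Real.arcsin_one, show ((-2:ℝ)/2) = -1 by norm_num, Real.arcsin_neg_one,
    show (4:ℝ) - 2^2 = 0 by norm_num, Real.sqrt_zero]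
  ring


lemma sc1 : ∫ x in (-2:ℝ)..2, x * Real.sqrt (4 - x^2) = 0 := by
  have h := intervalIntegral.integral_comp_neg (a := (-2:ℝ)) (b := 2)
    (fun x : ℝ => x * Real.sqrt (4 - x^2))
  simp only [neg_neg, show -(2:ℝ) = (-2:ℝ) by norm_num] at h
  have h2 : ∫ x in (-2:ℝ)..2, (-x) * Real.sqrt (4 - (-x)^2)
      = ∫ x in (-2:ℝ)..2, -(x * Real.sqrt (4 - x^2)) := by
    apply intervalIntegral.integral_congr
    intro x _
    simp only [neg_sq]
    ring
  rw [h2, intervalIntegral.integral_neg] at h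
  linarith

lemma sc2 : ∫ x in (-2:ℝ)..2, x^2 * Real.sqrt (4 - x^2) = 2 * Real.pi := by
  have key : ∫ x in (-2:ℝ)..2, x^2 * Real.sqrt (4 - x^2)
      = (fun y : ℝ => -(y/4) * (Real.sqrt (4 - y^2))^3 + y/2 * Real.sqrt (4 - y^2)
          + 2 * Real.arcsin (y/2)) 2
        - (fun y : ℝ => -(y/4) * (Real.sqrt (4 - y^2))^3 + y/2 * Real.sqrt (4 - y^2)
          + 2 * Real.arcsin (y/2)) (-2) := by
    refine intervalIntegral.integral_eq_sub_of_hasDeriv_right_of_le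
      (f := fun y : ℝ => -(y/4) * (Real.sqrt (4 - y^2))^3 + y/2 * Real.sqrt (4 - y^2)
          + 2 * Real.arcsin (y/2))
      (f' := fun x : ℝ => x^2 * Real.sqrt (4 - x^2)) (by norm_num) ?_ ?_ ?_
    · apply Continuous.continuousOn
      have : Continuous Real.arcsin := Real.continuous_arcsin
      fun_prop
    · intro x hx
      have hx1 := hx.1
      have hx2 := hx.2
      have hpos : 0 < 4 - x^2 := by nlinarith
      have hS0 : Real.sqrt (4 - x^2) ≠ 0 := ne_of_gt (Real.sqrt_pos.mpr hpos)
      have hS2 : Real.sqrt (4 - x^2) ^ 2 = 4 - x^2 := Real.sq_sqrt hpos.le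
      have hsq : HasDerivAt (fun y : ℝ => 4 - y^2) (-(2*x)) x := by
        simpa using ((hasDerivAt_pow 2 x).const_sub 4)
      have h1 : HasDerivAt (fun y : ℝ => Real.sqrt (4 - y^2))
          (-(2*x) / (2 * Real.sqrt (4 - x^2))) x := hsq.sqrt (ne_of_gt hpos)
      have hcube := h1.pow 3
      have hb := (((hasDerivAt_id x).div_const 4).neg).mul hcube
      have h3 := ((hasDerivAt_id x).div_const 2).mul h1
      have h4 : HasDerivAt (fun y : ℝ => Real.arcsin (y/2))
          (1 / Real.sqrt (1 - (x/2)^2) * (1/2)) x :=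
        (Real.hasDerivAt_arcsin (by intro hc; rw [div_eq_iff (by norm_num : (2:ℝ) ≠ 0)] at hc; linarith)
          (by intro hc; rw [div_eq_iff (by norm_num : (2:ℝ) ≠ 0)] at hc; linarith)).comp x
          ((hasDerivAt_id x).div_const 2)
      have h5 := (hb.add h3).add (h4.const_mul 2)
      have hhalf : Real.sqrt (1 - (x/2)^2) = Real.sqrt (4 - x^2) / 2 := by
        rw [show (1 - (x/2)^2) = (4 - x^2)/4 by ring, Real.sqrt_div hpos.le, sqrt_four]
      refine (HasDerivAt.hasDerivWithinAt ?_)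
      convert h5 using 1
      · rfl
      rw [hhalf]
      simp only [id, Pi.neg_apply, Pi.pow_apply]
      field_simp
      rw [show (3:ℕ) - 1 = 2 from rfl]
      linear_combination (2*(Real.sqrt (4-x^2))^2 + 4) * hS2
    · exact (Continuous.continuousOn (by fun_prop)).intervalIntegrable
  rw [key]
  norm_num [Real.arcsin_one, show ((-2:ℝ)/2) = -1 by norm_num, Real.arcsin_neg_one,
    show (4:ℝ) - 2^2 = 0 by norm_num, Real.sqrt_zero]
  ring


lemma taylor_lb (p : ℝ) (hp : 2 ≤ p) (δ : ℝ) (hδ0 : 0 < δ) (hδ1 : δ < 1)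
    (u : ℝ) (hu : |u| ≤ δ) :
    1 + p*u + (p*(p-1)*(1-δ)^(p-2)/2) * u^2 ≤ (1+u)^(p:ℝ) := by
  set c : ℝ := p*(p-1)*(1-δ)^(p-2) with hc
  have hδ1' : (0:ℝ) < 1 - δ := by linarith
  set f : ℝ → ℝ := fun u => (1+u)^(p:ℝ) - 1 - p*u - c/2*u^2 with hf
  set g : ℝ → ℝ := fun u => p*(1+u)^(p-1) - p - c*u with hg
  -- derivative facts
  have hder : ∀ u : ℝ, -1 < u → HasDerivAt f (g u) u := by
    intro u hu1
    have h1u : (0:ℝ) < 1 + u := by linarith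
    have hb : HasDerivAt (fun y : ℝ => (1+y)^(p:ℝ)) (p * (1+u)^(p-1) * 1) u :=
      (Real.hasDerivAt_rpow_const (Or.inl h1u.ne')).comp u ((hasDerivAt_id u).const_add 1)
    have := ((hb.sub_const 1).sub ((hasDerivAt_id u).const_mul p)).sub
      (((hasDerivAt_pow 2 u).const_mul (c/2)))
    convert this using 1
    · rfl
    · rfl
    · rfl
    simp [hg]
    ring
  have hder' : ∀ u : ℝ, -1 < u → HasDerivAt g (p*(p-1)*(1+u)^(p-2) - c) u := by
    intro u hu1
    have h1u : (0:ℝ) < 1 + u := by linarith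
    have hb : HasDerivAt (fun y : ℝ => (1+y)^(p-1:ℝ)) ((p-1) * (1+u)^(p-1-1) * 1) u :=
      (Real.hasDerivAt_rpow_const (Or.inl h1u.ne')).comp u ((hasDerivAt_id u).const_add 1)
    have := ((hb.const_mul p).sub_const p).sub ((hasDerivAt_id u).const_mul c)
    convert this using 1
    · rfl
    · rfl
    · rfl
    simp
    ring_nf
  -- g is monotone on [-δ, δ]
  have hginc : MonotoneOn g (Set.Icc (-δ) δ) := by
    apply monotoneOn_of_deriv_nonneg (convex_Icc _ _)
    · intro x hx
      exact (hder' x (by simp at hx; linarith [hx.1])).differentiableAt.continuousAt.continuousWithinAt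
    · intro x hx
      rw [interior_Icc] at hx
      exact (hder' x (by simp at hx; linarith [hx.1])).differentiableAt.differentiableWithinAt
    · intro x hx
      rw [interior_Icc] at hx
      obtain ⟨hx1, hx2⟩ := hx
      rw [(hder' x (by linarith)).deriv]
      have h1 : (1-δ:ℝ) ^ (p-2) ≤ (1+x) ^ (p-2) :=
        Real.rpow_le_rpow hδ1'.le (by linarith) (by linarith)
      have hp1 : 0 ≤ p*(p-1) := by nlinarith
      rw [hc]
      nlinarith [mul_le_mul_of_nonneg_left h1 hp1]
  have hg0 : g 0 = 0 := by simp [hg, Real.one_rpow]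
  have hf0 : f 0 = 0 := by simp [hf, Real.one_rpow]
  have habs := abs_le.mp hu
  -- case split
  rcases le_or_gt 0 u with hu0 | hu0
  · have hmono : MonotoneOn f (Set.Icc 0 δ) := by
      apply monotoneOn_of_deriv_nonneg (convex_Icc _ _)
      · intro x hx
        exact (hder x (by simp at hx; linarith [hx.1])).differentiableAt.continuousAt.continuousWithinAt
      · intro x hx
        rw [interior_Icc] at hx
        exact (hder x (by linarith [hx.1])).differentiableAt.differentiableWithinAt
      · intro x hx
        rw [interior_Icc] at hx
        rw [(hder x (by linarith [hx.1])).deriv]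
        have := hginc (Set.mem_Icc.mpr ⟨by linarith, by linarith⟩)
          (Set.mem_Icc.mpr ⟨by linarith [hx.1], hx.2.le⟩) hx.1.le
        rw [hg0] at this
        exact this
    have := hmono (Set.mem_Icc.mpr ⟨le_refl 0, hδ0.le⟩)
      (Set.mem_Icc.mpr ⟨hu0, habs.2⟩) hu0
    rw [hf0] at this
    simp only [hf] at this
    linarith
  · have hanti : AntitoneOn f (Set.Icc (-δ) 0) := by
      apply antitoneOn_of_deriv_nonpos (convex_Icc _ _)
      · intro x hx
        exact (hder x (by simp at hx; linarith [hx.1])).differentiableAt.continuousAt.continuousWithinAt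
      · intro x hx
        rw [interior_Icc] at hx
        exact (hder x (by linarith [hx.1])).differentiableAt.differentiableWithinAt
      · intro x hx
        rw [interior_Icc] at hx
        rw [(hder x (by linarith [hx.1])).deriv]
        have := hginc (Set.mem_Icc.mpr ⟨hx.1.le, by linarith [hx.2]⟩)
          (Set.mem_Icc.mpr ⟨by linarith, hδ0.le⟩) hx.2.le
        rw [hg0] at this
        exact this
    have := hanti (Set.mem_Icc.mpr ⟨habs.1, hu0.le⟩)
      (Set.mem_Icc.mpr ⟨by linarith, le_refl 0⟩) hu0.le
    rw [hf0] at this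
    simp only [hf] at this
    linarith

lemma moment_combo (α β γ : ℝ) :
    ∫ x in (-2:ℝ)..2, (α + β*x + γ*x^2) * (Real.sqrt (4-x^2)/(2*Real.pi)) = α + γ := by
  have hi0 : IntervalIntegrable (fun x : ℝ => α/(2*Real.pi) * Real.sqrt (4-x^2))
      MeasureTheory.volume (-2) 2 := (Continuous.continuousOn (by fun_prop)).intervalIntegrable
  have hi1 : IntervalIntegrable (fun x : ℝ => β/(2*Real.pi) * (x * Real.sqrt (4-x^2)))
      MeasureTheory.volume (-2) 2 := (Continuous.continuousOn (by fun_prop)).intervalIntegrable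
  have hi2 : IntervalIntegrable (fun x : ℝ => γ/(2*Real.pi) * (x^2 * Real.sqrt (4-x^2)))
      MeasureTheory.volume (-2) 2 := (Continuous.continuousOn (by fun_prop)).intervalIntegrable
  have hcong : ∫ x in (-2:ℝ)..2, (α + β*x + γ*x^2) * (Real.sqrt (4-x^2)/(2*Real.pi))
      = ∫ x in (-2:ℝ)..2, (α/(2*Real.pi) * Real.sqrt (4-x^2)
        + β/(2*Real.pi) * (x * Real.sqrt (4-x^2))
        + γ/(2*Real.pi) * (x^2 * Real.sqrt (4-x^2))) := by
    apply intervalIntegral.integral_congr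
    intro x _
    ring
  rw [hcong, intervalIntegral.integral_add (hi0.add hi1) hi2,
    intervalIntegral.integral_add hi0 hi1,
    intervalIntegral.integral_const_mul, intervalIntegral.integral_const_mul,
    intervalIntegral.integral_const_mul, sc0, sc1, sc2]
  have : Real.pi ≠ 0 := Real.pi_ne_zero
  field_simp
  ring

/-- If `p ≥ 2`, `s ∈ (0,1]` and `∫ (1+asx)^p dμ(x) ≤ (1+a²)^{p/2}` for all sufficiently
small `a > 0` (μ the semicircle distribution), then `p(p-1)s² ≤ p`, i.e. `s ≤ (p-1)^{-1/2}`. -/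
theorem stmt16 (p s : ℝ) (hp : 2 ≤ p) (hs0 : 0 < s) (hs1 : s ≤ 1)
    (h : ∃ ε > 0, ∀ a : ℝ, 0 < a → a < ε →
      (∫ x in (-2 : ℝ)..2, (1 + a * s * x) ^ p * (Real.sqrt (4 - x ^ 2) / (2 * Real.pi)))
        ≤ (1 + a ^ 2) ^ (p / 2)) :
    p * (p - 1) * s ^ 2 ≤ p ∧ s ≤ (p - 1) ^ (-(1 : ℝ) / 2) := by
  obtain ⟨ε, hε, hineq⟩ := h
  have hppos : (0:ℝ) < p := by linarith
  -- key pointwise-in-a inequality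
  have key : ∀ a : ℝ, 0 < a → a < ε → 2*a*s < 1 → (p/2-1)*a^2 < 1 →
      p*(p-1)*(1-2*a*s)^(p-2)*s^2*(1+a^2-p/2*a^2) ≤ p := by
    intro a ha haε hδ1 hD
    set c : ℝ := p*(p-1)*(1-2*a*s)^(p-2) with hc
    have hδ0 : 0 < 2*a*s := by positivity
    have hDpos : 0 < 1+a^2-p/2*a^2 := by nlinarith
    have ha2 : (0:ℝ) < 1 + a^2 := by positivity
    -- lower bound on the integral
    have hFlb : 1 + c/2*(a*s)^2 ≤
        ∫ x in (-2:ℝ)..2, (1 + a*s*x)^p * (Real.sqrt (4-x^2)/(2*Real.pi)) := by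
      have hmc := moment_combo 1 (p*(a*s)) (c/2*(a*s)^2)
      rw [← hmc]
      apply intervalIntegral.integral_mono_on (by norm_num)
      · exact (Continuous.continuousOn (by fun_prop)).intervalIntegrable
      · apply ContinuousOn.intervalIntegrable
        apply ContinuousOn.mul
        · intro x hx
          rw [Set.uIcc_of_le (by norm_num : (-2:ℝ) ≤ 2)] at hx
          have hxb : |x| ≤ 2 := abs_le.mpr ⟨hx.1, hx.2⟩
          have hbase : 0 < 1 + a*s*x := by
            have : |a*s*x| ≤ 2*a*s := by
              rw [abs_mul, abs_of_pos (by positivity : (0:ℝ) < a*s)]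
              calc a*s*|x| ≤ a*s*2 := by
                    apply mul_le_mul_of_nonneg_left hxb (by positivity)
                _ = 2*a*s := by ring
            have := (abs_le.mp this).1
            linarith
          have hcb : ContinuousAt (fun x : ℝ => 1 + a*s*x) x := by fun_prop
          exact (hcb.rpow_const (Or.inl hbase.ne')).continuousWithinAt
        · exact Continuous.continuousOn (by fun_prop)
      · intro x hx
        have hxb : |x| ≤ 2 := abs_le.mpr ⟨hx.1, hx.2⟩
        have hub : |a*s*x| ≤ 2*a*s := by
          rw [abs_mul, abs_of_pos (by positivity : (0:ℝ) < a*s)]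
          calc a*s*|x| ≤ a*s*2 := by
                apply mul_le_mul_of_nonneg_left hxb (by positivity)
            _ = 2*a*s := by ring
        have htl := taylor_lb p hp (2*a*s) hδ0 hδ1 (a*s*x) hub
        have hw : 0 ≤ Real.sqrt (4-x^2)/(2*Real.pi) := by positivity
        have := mul_le_mul_of_nonneg_right htl hw
        calc (1 + p*(a*s)*x + c/2*(a*s)^2*x^2) * (Real.sqrt (4-x^2)/(2*Real.pi))
            = (1 + p*(a*s*x) + (p*(p-1)*(1-2*a*s)^(p-2)/2) * (a*s*x)^2)
              * (Real.sqrt (4-x^2)/(2*Real.pi)) := by rw [hc]; ring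
          _ ≤ (1+a*s*x)^p * (Real.sqrt (4-x^2)/(2*Real.pi)) := this
    -- Bernoulli upper bound on the RHS
    have hG : (0:ℝ) < (1+a^2)^(p/2) := Real.rpow_pos_of_pos ha2 _
    have hBer : 1 + (p/2) * (-(a^2/(1+a^2))) ≤ (1 + (-(a^2/(1+a^2))))^(p/2 : ℝ) := by
      apply one_add_mul_self_le_rpow_one_add _ (by linarith)
      have : a^2/(1+a^2) ≤ 1 := by
        rw [div_le_one ha2]; linarith
      linarith
    have hsimp : (1 + (-(a^2/(1+a^2))) : ℝ) = (1+a^2)⁻¹ := by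
      field_simp
      ring
    rw [hsimp, Real.inv_rpow ha2.le] at hBer
    have hfac : (1 + (p/2) * (-(a^2/(1+a^2)))) = (1+a^2-p/2*a^2) / (1+a^2) := by
      field_simp; ring
    have hfacpos : 0 < 1 + (p/2) * (-(a^2/(1+a^2))) := by
      rw [hfac]; positivity
    -- chain
    have hchain : (1 + c/2*(a*s)^2) * (1 + (p/2) * (-(a^2/(1+a^2)))) ≤ 1 := by
      calc (1 + c/2*(a*s)^2) * (1 + (p/2) * (-(a^2/(1+a^2))))
          ≤ (1+a^2)^(p/2) * (((1+a^2)^(p/2))⁻¹) := by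
            apply mul_le_mul (le_trans hFlb (hineq a ha haε)) hBer hfacpos.le hG.le
        _ = 1 := mul_inv_cancel₀ hG.ne'
    rw [hfac] at hchain
    have hchain2 : (1 + c/2*(a*s)^2) * (1+a^2-p/2*a^2) ≤ 1 + a^2 := by
      have h' := mul_le_mul_of_nonneg_right hchain ha2.le
      calc (1 + c/2*(a*s)^2) * (1+a^2-p/2*a^2)
          = (1 + c/2*(a*s)^2) * ((1+a^2-p/2*a^2)/(1+a^2)) * (1+a^2) := by
            field_simp
        _ ≤ 1 * (1+a^2) := h'
        _ = 1 + a^2 := by ring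
    have hkey2 : c*s^2*(1+a^2-p/2*a^2)*a^2 ≤ p*a^2 := by nlinarith [hchain2]
    have := (mul_le_mul_iff_of_pos_right (by positivity : (0:ℝ) < a^2)).mp hkey2
    calc p*(p-1)*(1-2*a*s)^(p-2)*s^2*(1+a^2-p/2*a^2) = c*s^2*(1+a^2-p/2*a^2) := by
          rw [hc]
      _ ≤ p := this
  -- take the limit a → 0⁺
  have hmain : p * (p-1) * s^2 ≤ p := by
    set F : ℝ → ℝ := fun a => p*(p-1)*(1-2*a*s)^(p-2)*s^2*(1+a^2-p/2*a^2) with hF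
    have hev : ∀ᶠ a in nhdsWithin 0 (Set.Ioi 0), F a ≤ p := by
      have e1 : ∀ᶠ a : ℝ in nhds 0, a < ε := by
        have : Set.Iio ε ∈ nhds (0:ℝ) := Iio_mem_nhds hε
        exact this
      have e2 : ∀ᶠ a : ℝ in nhds 0, 2*a*s < 1 := by
        have hc : Continuous (fun a : ℝ => 2*a*s) := by fun_prop
        have := hc.continuousAt (x := 0)
        have h0 : (fun a : ℝ => 2*a*s) 0 = 0 := by norm_num
        exact this.eventually_lt_const (by norm_num [h0])
      have e3 : ∀ᶠ a : ℝ in nhds 0, (p/2-1)*a^2 < 1 := by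
        have hc : Continuous (fun a : ℝ => (p/2-1)*a^2) := by fun_prop
        have := hc.continuousAt (x := 0)
        exact this.eventually_lt_const (by norm_num)
      have := ((e1.and (e2.and e3)).filter_mono nhdsWithin_le_nhds).and
        (eventually_mem_nhdsWithin (s := Set.Ioi (0:ℝ)) (a := 0))
      filter_upwards [this] with a ⟨⟨h1, h2, h3⟩, h4⟩
      exact key a h4 h1 h2 h3
    have htend : Filter.Tendsto F (nhdsWithin 0 (Set.Ioi 0)) (nhds (p*(p-1)*s^2)) := by
      have h1 : ContinuousAt (fun a : ℝ => (1-2*a*s)^(p-2)) 0 :=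
        ContinuousAt.rpow_const (by fun_prop) (Or.inl (by norm_num))
      have h2 : ContinuousAt F 0 := by
        rw [hF]
        exact (((continuousAt_const.mul h1).mul continuousAt_const).mul (by fun_prop))
      have h3 : Filter.Tendsto F (nhdsWithin 0 (Set.Ioi 0)) (nhds (F 0)) := h2.tendsto.mono_left nhdsWithin_le_nhds
      have h4 : F 0 = p*(p-1)*s^2 := by
        rw [hF]; norm_num [Real.one_rpow]
      rwa [h4] at h3
    exact le_of_tendsto htend hev
  refine ⟨hmain, ?_⟩
  have hp1 : (0:ℝ) < p - 1 := by linarith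
  have hsq : (p-1)*s^2 ≤ 1 := by nlinarith
  have hsqp : 0 < Real.sqrt (p-1) := Real.sqrt_pos.mpr hp1
  have hrw : (p-1) ^ (-(1:ℝ)/2) = (Real.sqrt (p-1))⁻¹ := by
    rw [show (-(1:ℝ)/2) = -(1/2) by norm_num, Real.rpow_neg hp1.le, Real.sqrt_eq_rpow]
  rw [hrw, inv_eq_one_div, le_div_iff₀ hsqp]
  nlinarith [Real.sq_sqrt hp1.le, Real.sqrt_nonneg (p-1)]
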